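/- Let b1, b2 > 0 and δ > 1, and define γ0 : [0, ∞) → ℝ by γ0(x) = b1 x − b2 x^δ. Then for all x > y ≥ 0 one has γ0(x) − γ0(y) ≤ b1 (x − y) − b2 (x − y)^δ. Moreover, setting l0 := (2 b1 / b2)^{1/(δ−1)}, for all x > y ≥ 0 with x − y > l0 one has γ0(x) − γ0(y) ≤ −(b2/2)(x − y)^δ. -/

import Mathlib

open Set Filter MeasureTheory

/-- Example 3.6(2) of the paper: the drift γ0(x) = b1 x − b2 x^δ satisfies
γ0(x) − γ0(y) ≤ b1 (x−y) − b2 (x−y)^δ for x > y ≥ 0, and with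
l0 = (2b1/b2)^{1/(δ−1)} one has γ0(x) − γ0(y) ≤ −(b2/2)(x−y)^δ whenever x − y > l0. -/
theorem stmt_15
    (b1 b2 δ : ℝ) (hb1 : 0 < b1) (hb2 : 0 < b2) (hδ : 1 < δ)
    (γ0 : ℝ → ℝ) (hγ0 : ∀ x, 0 ≤ x → γ0 x = b1 * x - b2 * x ^ δ) :
    (∀ x y : ℝ, 0 ≤ y → y < x →
      γ0 x - γ0 y ≤ b1 * (x - y) - b2 * (x - y) ^ δ) ∧
    ∀ x y : ℝ, 0 ≤ y → y < x → (2 * b1 / b2) ^ (1 / (δ - 1)) < x - y →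
      γ0 x - γ0 y ≤ -(b2 / 2) * (x - y) ^ δ := by
  have key : ∀ x y : ℝ, 0 ≤ y → y < x →
      γ0 x - γ0 y ≤ b1 * (x - y) - b2 * (x - y) ^ δ := by
    intro x y hy hyx
    have hx : 0 ≤ x := le_of_lt (lt_of_le_of_lt hy hyx)
    rw [hγ0 x hx, hγ0 y hy]
    have hr' : (0:ℝ) ≤ x - y := by linarith
    have h := NNReal.add_rpow_le_rpow_add ((x - y).toNNReal) (y.toNNReal) hδ.le
    have h' : (x - y) ^ δ + y ^ δ ≤ x ^ δ := by
      have h2 := (NNReal.coe_le_coe).2 h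
      push_cast [NNReal.coe_rpow, Real.coe_toNNReal _ hr', Real.coe_toNNReal _ hy] at h2
      rw [show x - y + y = x by ring] at h2
      exact h2
    nlinarith
  refine ⟨key, fun x y hy hyx hl => ?_⟩
  have hr : 0 < x - y := by linarith
  have hδ1 : 0 < δ - 1 := by linarith
  have ha : (0:ℝ) ≤ 2 * b1 / b2 := by positivity
  have hl0 : (0:ℝ) ≤ (2 * b1 / b2) ^ (1 / (δ - 1)) := Real.rpow_nonneg ha _
  have hpow : 2 * b1 / b2 < (x - y) ^ (δ - 1) := by
    have h1 := Real.rpow_lt_rpow hl0 hl hδ1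
    have h2 : ((2 * b1 / b2) ^ (1 / (δ - 1))) ^ (δ - 1) = 2 * b1 / b2 := by
      rw [← Real.rpow_mul ha, one_div, inv_mul_cancel₀ (ne_of_gt hδ1), Real.rpow_one]
    rwa [h2] at h1
  have hsplit : (x - y) ^ δ = (x - y) ^ (δ - 1) * (x - y) := by
    have h1 := Real.rpow_add hr (δ - 1) 1
    rw [Real.rpow_one, show δ - 1 + 1 = δ by ring] at h1
    exact h1
  have hb1r : b1 * (x - y) ≤ b2 / 2 * (x - y) ^ δ := by
    rw [hsplit]
    have : 2 * b1 / b2 * (x - y) ≤ (x - y) ^ (δ - 1) * (x - y) :=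
      mul_le_mul_of_nonneg_right (le_of_lt hpow) (le_of_lt hr)
    calc b1 * (x - y) = b2 / 2 * (2 * b1 / b2 * (x - y)) := by field_simp
    _ ≤ b2 / 2 * ((x - y) ^ (δ - 1) * (x - y)) := by
        exact mul_le_mul_of_nonneg_left this (by positivity)
  have := key x y hy hyx
  nlinarith
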